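/- For any unit vector s ∈ ℂ^(2^n), PAR_l(s) = 2^n · sup over unit product vectors l of |⟨s,l⟩|^2 satisfies 1 ≤ PAR_l(s) ≤ 2^n, with PAR_l(s) = 2^n if and only if s is itself (up to global phase) a tensor product of n unit vectors in ℂ^2. -/

import Mathlib

open scoped Classical

private lemma zmod2_sum {M : Type*} [AddCommMonoid M] (g : ZMod 2 → M) :
    ∑ a : ZMod 2, g a = g 0 + g 1 := by
  show ∑ a : Fin 2, g a = _
  exact Fin.sum_univ_two g

private lemma zmod2_cases (a : ZMod 2) : a = 0 ∨ a = 1 := by revert a; decide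

/-- the squared norm of a product vector is the product of square norms -/
private lemma prod_norm_sq (n : ℕ) (l : Fin n → ZMod 2 → ℂ)
    (hl : ∀ i, ‖l i 0‖ ^ 2 + ‖l i 1‖ ^ 2 = 1) :
    ∑ x : Fin n → ZMod 2, ‖∏ i, l i (x i)‖ ^ 2 = 1 := by
  have h1 : ∀ x : Fin n → ZMod 2,
      ‖∏ i, l i (x i)‖ ^ 2 = ∏ i, ‖l i (x i)‖ ^ 2 := by
    intro x
    rw [norm_prod, ← Finset.prod_pow]
  simp_rw [h1]
  rw [← Fintype.prod_sum (fun i a => ‖l i a‖ ^ 2)]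
  have h2 : ∀ i : Fin n, ∑ a : ZMod 2, ‖l i a‖ ^ 2 = 1 := fun i => by
    rw [zmod2_sum]; exact hl i
  simp [h2]

/-- Cauchy–Schwarz bound for the overlap -/
private lemma cs_bound (n : ℕ) (s : (Fin n → ZMod 2) → ℂ)
    (hnorm : ∑ x : Fin n → ZMod 2, ‖s x‖ ^ 2 = 1)
    (l : Fin n → ZMod 2 → ℂ)
    (hl : ∀ i, ‖l i 0‖ ^ 2 + ‖l i 1‖ ^ 2 = 1) :
    ‖∑ x : Fin n → ZMod 2,
      s x * (starRingEnd ℂ) (∏ i, l i (x i))‖ ^ 2 ≤ 1 := by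
  set L : (Fin n → ZMod 2) → ℂ := fun x => ∏ i, l i (x i) with hL
  set S' : EuclideanSpace ℂ (Fin n → ZMod 2) := (WithLp.equiv 2 _).symm s
  set L' : EuclideanSpace ℂ (Fin n → ZMod 2) := (WithLp.equiv 2 _).symm L
  have hinner : (inner ℂ L' S' : ℂ) = ∑ x : Fin n → ZMod 2, s x * (starRingEnd ℂ) (L x) := by
    rw [PiLp.inner_apply]
    simp [S', L', RCLike.inner_apply, mul_comm]
  have hnS : ‖S'‖ = 1 := by
    rw [EuclideanSpace.norm_eq]
    simp only [S', WithLp.equiv_symm_apply, PiLp.toLp_apply, hnorm, Real.sqrt_one]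
  have hnL : ‖L'‖ = 1 := by
    rw [EuclideanSpace.norm_eq]
    simp only [L', L, WithLp.equiv_symm_apply, PiLp.toLp_apply,
      prod_norm_sq n l hl, Real.sqrt_one]
  have := norm_inner_le_norm (𝕜 := ℂ) L' S'
  rw [hnS, hnL, hinner, mul_one] at this
  calc ‖∑ x : Fin n → ZMod 2, s x * (starRingEnd ℂ) (L x)‖ ^ 2
      ≤ 1 ^ 2 := by
        apply pow_le_pow_left₀ (norm_nonneg _) this
    _ = 1 := one_pow 2

/-- equality case of Cauchy–Schwarz -/
private lemma cs_eq (n : ℕ) (s : (Fin n → ZMod 2) → ℂ)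
    (hnorm : ∑ x : Fin n → ZMod 2, ‖s x‖ ^ 2 = 1)
    (l : Fin n → ZMod 2 → ℂ)
    (hl : ∀ i, ‖l i 0‖ ^ 2 + ‖l i 1‖ ^ 2 = 1)
    (heq : ‖∑ x : Fin n → ZMod 2,
      s x * (starRingEnd ℂ) (∏ i, l i (x i))‖ ^ 2 = 1) :
    ∃ c : ℂ, ‖c‖ = 1 ∧ ∀ x, s x = c * ∏ i, l i (x i) := by
  set L : (Fin n → ZMod 2) → ℂ := fun x => ∏ i, l i (x i) with hLdef
  set S' : EuclideanSpace ℂ (Fin n → ZMod 2) := (WithLp.equiv 2 _).symm s with hS'def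
  set L' : EuclideanSpace ℂ (Fin n → ZMod 2) := (WithLp.equiv 2 _).symm L with hL'def
  have hinner : (inner ℂ L' S' : ℂ) = ∑ x : Fin n → ZMod 2, s x * (starRingEnd ℂ) (L x) := by
    rw [PiLp.inner_apply]
    simp [S', L', RCLike.inner_apply, mul_comm]
  have hnS : ‖S'‖ = 1 := by
    rw [EuclideanSpace.norm_eq]
    simp only [S', WithLp.equiv_symm_apply, PiLp.toLp_apply, hnorm, Real.sqrt_one]
  have hnL : ‖L'‖ = 1 := by
    rw [EuclideanSpace.norm_eq]
    simp only [L', L, WithLp.equiv_symm_apply, PiLp.toLp_apply,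
      prod_norm_sq n l hl, Real.sqrt_one]
  have habs : ‖∑ x : Fin n → ZMod 2, s x * (starRingEnd ℂ) (L x)‖ = 1 := by
    have h0 := norm_nonneg (∑ x : Fin n → ZMod 2, s x * (starRingEnd ℂ) (L x))
    nlinarith [heq]
  have hni : ‖(inner ℂ L' S' : ℂ)‖ = ‖L'‖ * ‖S'‖ := by
    rw [hnS, hnL, hinner, habs, mul_one]
  have hL0 : L' ≠ 0 := by
    intro h; rw [h, norm_zero] at hnL; norm_num at hnL
  have hS0 : S' ≠ 0 := by
    intro h; rw [h, norm_zero] at hnS; norm_num at hnS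
  obtain ⟨r, hr0, hrs⟩ := (norm_inner_eq_norm_iff hL0 hS0).mp hni
  have hrabs : ‖r‖ = 1 := by
    have : ‖S'‖ = ‖r‖ * ‖L'‖ := by rw [hrs, norm_smul]
    rw [hnS, hnL, mul_one] at this
    exact this.symm
  refine ⟨r, hrabs, fun x => ?_⟩
  have : s = fun x => r * L x := by
    have h1 := congrArg (WithLp.equiv 2 ((Fin n → ZMod 2) → ℂ)) hrs
    change WithLp.ofLp S' = WithLp.ofLp (r • L') at h1
    rw [WithLp.ofLp_smul] at h1
    simp only [hS'def, hL'def, WithLp.equiv_symm_apply, WithLp.ofLp_toLp] at h1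
    funext x
    have := congrFun h1 x
    simpa [Pi.smul_apply, smul_eq_mul] using this
  exact congrFun this x

/-- For a unit vector `s ∈ ℂ^(2^n)`, `PAR_l(s) = 2^n · sup_l |⟨s,l⟩|²` over unit
product vectors `l` satisfies `1 ≤ PAR_l(s) ≤ 2^n`, with equality `PAR_l(s) = 2^n`
iff `s` is itself, up to global phase, a tensor product of unit vectors in `ℂ²`. -/
theorem stmt_9 (n : ℕ) (s : (Fin n → ZMod 2) → ℂ)
    (hnorm : ∑ x : Fin n → ZMod 2, ‖s x‖ ^ 2 = 1)
    (PARl : ℝ)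
    (hPAR : PARl = 2 ^ n * sSup { r : ℝ |
        ∃ l : Fin n → (ZMod 2 → ℂ),
          (∀ i, ‖l i 0‖ ^ 2 + ‖l i 1‖ ^ 2 = 1) ∧
          r = ‖∑ x : Fin n → ZMod 2,
                s x * (starRingEnd ℂ) (∏ i, l i (x i))‖ ^ 2 }) :
    1 ≤ PARl ∧ PARl ≤ 2 ^ n ∧
      (PARl = 2 ^ n ↔
        ∃ (c : ℂ) (l : Fin n → (ZMod 2 → ℂ)),
          ‖c‖ = 1 ∧
          (∀ i, ‖l i 0‖ ^ 2 + ‖l i 1‖ ^ 2 = 1) ∧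
          ∀ x, s x = c * ∏ i, l i (x i)) := by
  -- notation
  set f : (Fin n → ZMod 2 → ℂ) → ℝ := fun l =>
    ‖∑ x : Fin n → ZMod 2,
      s x * (starRingEnd ℂ) (∏ i, l i (x i))‖ ^ 2 with hfdef
  set K : Set (Fin n → ZMod 2 → ℂ) :=
    {l | ∀ i, ‖l i 0‖ ^ 2 + ‖l i 1‖ ^ 2 = 1} with hKdef
  set S : Set ℝ := { r : ℝ |
        ∃ l : Fin n → (ZMod 2 → ℂ),
          (∀ i, ‖l i 0‖ ^ 2 + ‖l i 1‖ ^ 2 = 1) ∧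
          r = ‖∑ x : Fin n → ZMod 2,
                s x * (starRingEnd ℂ) (∏ i, l i (x i))‖ ^ 2 } with hSdef
  have hSimg : S = f '' K := by
    ext r
    constructor
    · rintro ⟨l, hl, rfl⟩; exact ⟨l, hl, rfl⟩
    · rintro ⟨l, hl, rfl⟩; exact ⟨l, hl, rfl⟩
  -- upper bound on elements of S
  have hub : ∀ r ∈ S, r ≤ 1 := by
    rintro r ⟨l, hl, rfl⟩
    exact cs_bound n s hnorm l hl
  have hBdd : BddAbove S := ⟨1, hub⟩
  -- a large coordinate
  have hcard : (Fintype.card (Fin n → ZMod 2) : ℝ) = 2 ^ n := by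
    simp [ZMod.card]
  obtain ⟨x₀, hx₀⟩ : ∃ x : Fin n → ZMod 2, ((2:ℝ) ^ n)⁻¹ ≤ ‖s x‖ ^ 2 := by
    by_contra h
    push_neg at h
    have h2 : ∑ x : Fin n → ZMod 2, ‖s x‖ ^ 2
        < ∑ _x : Fin n → ZMod 2, ((2:ℝ) ^ n)⁻¹ :=
      Finset.sum_lt_sum_of_nonempty Finset.univ_nonempty (fun i _ => h i)
    rw [hnorm, Finset.sum_const, nsmul_eq_mul, Finset.card_univ, hcard,
      mul_inv_cancel₀ (by positivity : (2:ℝ) ^ n ≠ 0)] at h2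
    exact lt_irrefl 1 h2
  -- the basis product vector at x₀
  set l₀ : Fin n → ZMod 2 → ℂ := fun i a => if a = x₀ i then 1 else 0 with hl₀def
  have hl₀K : l₀ ∈ K := by
    intro i
    rcases zmod2_cases (x₀ i) with h | h <;> simp [hl₀def, h]
  have hfl₀ : f l₀ = ‖s x₀‖ ^ 2 := by
    have hterm : ∀ x : Fin n → ZMod 2,
        s x * (starRingEnd ℂ) (∏ i, l₀ i (x i)) = if x = x₀ then s x else 0 := by
      intro x
      by_cases hx : x = x₀
      · subst hx
        simp [hl₀def]
      · obtain ⟨i, hi⟩ := Function.ne_iff.mp hx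
        rw [Finset.prod_eq_zero (Finset.mem_univ i) (by simp [hl₀def, hi])]
        simp [hx]
    simp only [hfdef]
    rw [Finset.sum_congr rfl fun x _ => hterm x, Finset.sum_ite_eq' Finset.univ x₀ s]
    simp
  have hSne : S.Nonempty := ⟨f l₀, l₀, hl₀K, rfl⟩
  have hmem : f l₀ ∈ S := ⟨l₀, hl₀K, rfl⟩
  -- lower bound on the sup
  have hsup_lb : ((2:ℝ) ^ n)⁻¹ ≤ sSup S := le_trans (hfl₀ ▸ hx₀) (le_csSup hBdd hmem)
  have hsup_ub : sSup S ≤ 1 := csSup_le hSne hub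
  have hpow_pos : (0:ℝ) < 2 ^ n := by positivity
  constructor
  · rw [hPAR]
    calc (1:ℝ) = 2 ^ n * ((2:ℝ) ^ n)⁻¹ := by
          rw [mul_inv_cancel₀ (ne_of_gt hpow_pos)]
      _ ≤ 2 ^ n * sSup S := by
          exact mul_le_mul_of_nonneg_left hsup_lb (le_of_lt hpow_pos)
  constructor
  · rw [hPAR]
    calc (2:ℝ) ^ n * sSup S ≤ 2 ^ n * 1 :=
          mul_le_mul_of_nonneg_left hsup_ub (le_of_lt hpow_pos)
      _ = 2 ^ n := mul_one _
  constructor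
  · -- PARl = 2^n → product state
    intro hPe
    have hsup : sSup S = 1 := by
      have : (2:ℝ) ^ n * sSup S = 2 ^ n * 1 := by
        rw [← hPAR, hPe, mul_one]
      exact mul_left_cancel₀ (ne_of_gt hpow_pos) this
    -- attainment of the sup by compactness
    have hKc : IsCompact K := by
      have hclosed : IsClosed K := by
        have : K = ⋂ i : Fin n, {l : Fin n → ZMod 2 → ℂ |
            ‖l i 0‖ ^ 2 + ‖l i 1‖ ^ 2 = 1} := by
          ext l; simp [hKdef, Set.mem_iInter]
        rw [this]
        refine isClosed_iInter fun i => isClosed_eq ?_ continuous_const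
        exact (((continuous_norm.comp
            ((continuous_apply (0 : ZMod 2)).comp (continuous_apply i))).pow 2).add
          ((continuous_norm.comp
            ((continuous_apply (1 : ZMod 2)).comp (continuous_apply i))).pow 2))
      have hbdd : Bornology.IsBounded K := by
        apply Bornology.IsBounded.subset (Metric.isBounded_closedBall (x := (0 : Fin n → ZMod 2 → ℂ)) (r := 1))
        intro l hl
        rw [Metric.mem_closedBall, dist_zero_right]
        rw [pi_norm_le_iff_of_nonneg zero_le_one]
        intro i
        rw [pi_norm_le_iff_of_nonneg zero_le_one]
        intro a
        have hsq : ‖l i a‖ ^ 2 ≤ 1 := by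
          rcases zmod2_cases a with h | h <;>
            · rw [h]
              have := hl i
              nlinarith [norm_nonneg (l i 0), norm_nonneg (l i 1)]
        have := norm_nonneg (l i a)
        nlinarith
      exact Metric.isCompact_of_isClosed_isBounded hclosed hbdd
    have hfc : Continuous f := by
      apply Continuous.pow
      apply continuous_norm.comp
      apply continuous_finset_sum
      intro x _
      exact continuous_const.mul (continuous_star.comp
        (continuous_finset_prod _ fun i _ =>
          (continuous_apply (x i)).comp (continuous_apply i)))
    obtain ⟨lmax, hlmaxK, hlmax⟩ := hKc.exists_isMaxOn ⟨l₀, hl₀K⟩ hfc.continuousOn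
    have hgreat : IsGreatest S (f lmax) := by
      constructor
      · exact ⟨lmax, hlmaxK, rfl⟩
      · rintro r ⟨l, hl, rfl⟩
        exact hlmax hl
    have hfmax : f lmax = 1 := by
      rw [← hgreat.csSup_eq, hsup]
    obtain ⟨c, hc, hcs⟩ := cs_eq n s hnorm lmax hlmaxK hfmax
    exact ⟨c, lmax, hc, hlmaxK, hcs⟩
  · -- product state → PARl = 2^n
    rintro ⟨c, l, hc, hlK, hs⟩
    have hval : f l = 1 := by
      have hsum : (∑ x : Fin n → ZMod 2,
          s x * (starRingEnd ℂ) (∏ i, l i (x i))) = c := by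
        have : ∀ x : Fin n → ZMod 2,
            s x * (starRingEnd ℂ) (∏ i, l i (x i))
              = c * ((‖∏ i, l i (x i)‖ ^ 2 : ℝ) : ℂ) := by
          intro x
          rw [hs x, mul_assoc, Complex.mul_conj']
          norm_cast
        rw [Finset.sum_congr rfl fun x _ => this x, ← Finset.mul_sum,
          ← Complex.ofReal_sum, prod_norm_sq n l hlK, Complex.ofReal_one, mul_one]
      simp only [hfdef, hsum, hc, one_pow]
    have h1S : (1:ℝ) ∈ S := hval ▸ ⟨l, hlK, rfl⟩
    have : sSup S = 1 := le_antisymm hsup_ub (le_csSup hBdd h1S)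
    rw [hPAR, this, mul_one]
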